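/- Let h, ω > 0 and let g ∈ EuclideanSpace ℝ (Fin 2). Define z(τ) = (sin τ, −cos τ) and w(τ) = (cos τ, sin τ) in ℝ², and set η_g(τ) = (h/(h² + ω²)) · ( h·⟨g, z(τ)⟩ − ω·⟨g, w(τ)⟩ ). Then (1/(2π)) · ∫_{0}^{2π} ( ⟨g, z(τ)⟩ − η_g(τ) ) · z(τ) dτ = (ω/(2(h² + ω²))) · ( ω·g + h·J(g) ). -/

import Mathlib

open Real intervalIntegral


/-- The skew-symmetric rotation `J = [[0,1],[-1,0]]` on the plane: `J(v₁,v₂) = (v₂,-v₁)`. -/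
noncomputable def Jmap (v : EuclideanSpace ℝ (Fin 2)) : EuclideanSpace ℝ (Fin 2) :=
  WithLp.toLp 2 ![v 1, -v 0]

/-- The vector of probing/demodulation signals `z(τ) = (sin τ, −cos τ)`. -/
noncomputable def zsig (τ : ℝ) : EuclideanSpace ℝ (Fin 2) :=
  WithLp.toLp 2 ![Real.sin τ, -Real.cos τ]

/-- The quadrature signal `w(τ) = (cos τ, sin τ)`. -/
noncomputable def wsig (τ : ℝ) : EuclideanSpace ℝ (Fin 2) :=
  WithLp.toLp 2 ![Real.cos τ, Real.sin τ]

/-- **averaging identity of the extremum-seeking loop.** For `h, ω > 0`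
and `g ∈ ℝ²`, with `η_g(τ) = (h/(h²+ω²)) (h ⟨g, z(τ)⟩ − ω ⟨g, w(τ)⟩)` the steady-state
low-pass filter output, the average of the demodulated signal is
`(1/2π) ∫₀^{2π} (⟨g, z(τ)⟩ − η_g(τ)) z(τ) dτ = (ω/(2(h²+ω²))) (ω g + h J g)`. -/
theorem averaged_extremum_seeking_field (h ω : ℝ) (hh : 0 < h) (hω : 0 < ω)
    (g : EuclideanSpace ℝ (Fin 2)) :
    (1 / (2 * Real.pi)) •
        ∫ τ in (0 : ℝ)..(2 * Real.pi),
          ((inner ℝ g (zsig τ) : ℝ) -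
            h / (h ^ 2 + ω ^ 2) *
              (h * (inner ℝ g (zsig τ) : ℝ) - ω * (inner ℝ g (wsig τ) : ℝ))) • zsig τ =
      (ω / (2 * (h ^ 2 + ω ^ 2))) • (ω • g + h • Jmap g) := by
  have hden : h ^ 2 + ω ^ 2 ≠ 0 := by positivity
  have hπ := Real.pi_ne_zero
  set a := g 0 with ha
  set b := g 1 with hb
  set k := ω / (h ^ 2 + ω ^ 2) with hk
  set e0 : EuclideanSpace ℝ (Fin 2) := WithLp.toLp 2 ![1, 0] with he0
  set e1 : EuclideanSpace ℝ (Fin 2) := WithLp.toLp 2 ![0, 1] with he1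
  have key : ∀ τ : ℝ,
      ((inner ℝ g (zsig τ) : ℝ) -
        h / (h ^ 2 + ω ^ 2) *
          (h * (inner ℝ g (zsig τ) : ℝ) - ω * (inner ℝ g (wsig τ) : ℝ))) • zsig τ
      = (k * (ω * a + h * b) * Real.sin τ ^ 2
            + k * (h * a - ω * b) * (Real.sin τ * Real.cos τ)) • e0
        + (k * (ω * b - h * a) * Real.cos τ ^ 2
            - k * (ω * a + h * b) * (Real.sin τ * Real.cos τ)) • e1 := by
    intro τ
    refine PiLp.ext fun i => ?_
    fin_cases i <;>
      simp [zsig, wsig, he0, he1, PiLp.inner_apply, RCLike.inner_apply, Fin.sum_univ_two,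
        ← ha, ← hb, hk] <;>
      field_simp <;> ring
  simp only [key]
  have c1 : Continuous fun τ : ℝ =>
      (k * (ω * a + h * b) * Real.sin τ ^ 2
        + k * (h * a - ω * b) * (Real.sin τ * Real.cos τ)) • e0 := by fun_prop
  have c2 : Continuous fun τ : ℝ =>
      (k * (ω * b - h * a) * Real.cos τ ^ 2
        - k * (ω * a + h * b) * (Real.sin τ * Real.cos τ)) • e1 := by fun_prop
  rw [intervalIntegral.integral_add (c1.intervalIntegrable _ _) (c2.intervalIntegrable _ _),
    intervalIntegral.integral_smul_const, intervalIntegral.integral_smul_const]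
  have I1 : (∫ τ in (0:ℝ)..(2 * Real.pi), Real.sin τ ^ 2) = Real.pi := by
    rw [integral_sin_sq]; simp
  have I2 : (∫ τ in (0:ℝ)..(2 * Real.pi), Real.cos τ ^ 2) = Real.pi := by
    rw [integral_cos_sq]; simp
  have I3 : (∫ τ in (0:ℝ)..(2 * Real.pi), Real.sin τ * Real.cos τ) = 0 := by
    rw [integral_sin_mul_cos₁]; simp
  have E1 : (∫ τ in (0:ℝ)..(2 * Real.pi),
      (k * (ω * a + h * b) * Real.sin τ ^ 2
        + k * (h * a - ω * b) * (Real.sin τ * Real.cos τ)))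
      = k * (ω * a + h * b) * Real.pi := by
    rw [intervalIntegral.integral_add
        ((Continuous.intervalIntegrable (by fun_prop) _ _))
        ((Continuous.intervalIntegrable (by fun_prop) _ _)),
      intervalIntegral.integral_const_mul, intervalIntegral.integral_const_mul, I1, I3]
    ring
  have E2 : (∫ τ in (0:ℝ)..(2 * Real.pi),
      (k * (ω * b - h * a) * Real.cos τ ^ 2
        - k * (ω * a + h * b) * (Real.sin τ * Real.cos τ)))
      = k * (ω * b - h * a) * Real.pi := by
    rw [intervalIntegral.integral_sub
        ((Continuous.intervalIntegrable (by fun_prop) _ _))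
        ((Continuous.intervalIntegrable (by fun_prop) _ _)),
      intervalIntegral.integral_const_mul, intervalIntegral.integral_const_mul, I2, I3]
    ring
  rw [E1, E2]
  refine PiLp.ext fun i => ?_
  fin_cases i <;>
    simp [Jmap, he0, he1, ← ha, ← hb, hk] <;> field_simp <;> ring
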